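/- Let z ∈ ℂ with |z| ≥ 2 and Re z ≤ 0. Then consider the perturbed recurrence ρ̃_{j+1} = ρ̃_{j-1} - ((2j+2)/z) ρ̃_j + γ_j(z) + ε_{j+1} with initial perturbations |ε_0|, |ε_1| ≤ ε and |ε_j| ≤ ε for all j, compared to the exact sequence ρ_j(z) satisfying the same recurrence with ε_j = 0. Then for all n with n + 1 < |z|, |ρ_n(z) - ρ̃_n(z)| < e^{4(n+1)^2/|z|} (⌈n/2⌉ + 1) ε. -/

import Mathlib

set_option maxHeartbeats 1600000 in
theorem stmt_19 (z : ℂ) (hz : 2 ≤ ‖z‖) (hre : z.re ≤ 0)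
    (ε : ℝ) (hε : 0 < ε)
    (γ : ℕ → ℂ)
    (hγ : ∀ j, γ j = if Even j then (Complex.exp (2 * z) - 1) / z
                     else (Complex.exp (2 * z) + 1) / z)
    (ρ ρ' : ℕ → ℂ) (e : ℕ → ℂ)
    (hρ : ∀ j : ℕ, 1 ≤ j →
      ρ (j + 1) = ρ (j - 1) - ((2 * (j : ℂ) + 2) / z) * ρ j + γ j)
    (hρ' : ∀ j : ℕ, 1 ≤ j →
      ρ' (j + 1) = ρ' (j - 1) - ((2 * (j : ℂ) + 2) / z) * ρ' j + γ j + e (j + 1))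
    (h0 : ‖ρ' 0 - ρ 0‖ ≤ ε)
    (h1 : ‖ρ' 1 - ρ 1‖ ≤ ε)
    (he : ∀ j, ‖e j‖ ≤ ε) :
    ∀ n : ℕ, (n : ℝ) + 1 < ‖z‖ →
      ‖ρ n - ρ' n‖
        < Real.exp (4 * ((n : ℝ) + 1) ^ 2 / ‖z‖) * (((n + 1) / 2 : ℕ) + 1) * ε := by
  set r := ‖z‖ with hrdef
  have hr0 : (0:ℝ) < r := lt_of_lt_of_le (by norm_num) hz
  set B : ℕ → ℝ := fun k => Real.exp (((k:ℝ)^2 + k)/r) * ((((k+1)/2 : ℕ) : ℝ) + 1) * ε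
    with hB
  have hBpos : ∀ k, 0 < B k := by
    intro k
    have : (0:ℝ) < (((k+1)/2 : ℕ) : ℝ) + 1 := by positivity
    exact mul_pos (mul_pos (Real.exp_pos _) this) hε
  have key : ∀ m : ℕ, ‖ρ m - ρ' m‖ ≤ B m ∧
      ‖ρ (m+1) - ρ' (m+1)‖ ≤ B (m+1) := by
    intro m
    induction m with
    | zero =>
      constructor
      · have : B 0 = ε := by simp [hB]
        rw [this, norm_sub_rev]; exact h0
      · have h1' : ‖ρ 1 - ρ' 1‖ ≤ ε := by rw [norm_sub_rev]; exact h1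
        refine h1'.trans ?_
        have he1 : (1:ℝ) ≤ Real.exp (((1:ℝ)^2 + 1)/r) := Real.one_le_exp (by positivity)
        have : B 1 = Real.exp (((1:ℝ)^2 + 1)/r) * 2 * ε := by norm_num [hB]
        rw [this]
        nlinarith [hε]
    | succ m ih =>
      obtain ⟨ih1, ih2⟩ := ih
      refine ⟨ih2, ?_⟩
      -- recurrence at j = m+1
      have e1 := hρ (m+1) (by omega)
      have e2 := hρ' (m+1) (by omega)
      simp only [Nat.add_sub_cancel] at e1 e2
      have hd : ρ (m+1+1) - ρ' (m+1+1)
          = (ρ m - ρ' m) - ((2 * ((m:ℂ)+1) + 2) / z) * (ρ (m+1) - ρ' (m+1)) - e (m+2) := by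
        rw [e1, e2]; push_cast; ring
      -- |c| = (2m+4)/r
      have hc : ‖(2 * ((m:ℂ)+1) + 2) / z‖ = (2*(m:ℝ)+4)/r := by
        rw [norm_div]
        congr 1
        have : (2 * ((m:ℂ)+1) + 2) = ((2*m+4 : ℕ) : ℂ) := by push_cast; ring
        rw [this, Complex.norm_natCast]
        push_cast; ring
      have htri : ‖ρ (m+1+1) - ρ' (m+1+1)‖
          ≤ ‖ρ m - ρ' m‖
            + ((2*(m:ℝ)+4)/r) * ‖ρ (m+1) - ρ' (m+1)‖
            + ‖e (m+2)‖ := by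
        rw [hd]
        calc ‖(ρ m - ρ' m) - ((2 * ((m:ℂ)+1) + 2) / z) * (ρ (m+1) - ρ' (m+1)) - e (m+2)‖
            ≤ ‖(ρ m - ρ' m) - ((2 * ((m:ℂ)+1) + 2) / z) * (ρ (m+1) - ρ' (m+1))‖
              + ‖e (m+2)‖ := by
              exact (norm_sub_le _ _)
          _ ≤ ‖ρ m - ρ' m‖
              + ‖((2 * ((m:ℂ)+1) + 2) / z) * (ρ (m+1) - ρ' (m+1))‖
              + ‖e (m+2)‖ := by
              have := norm_sub_le (ρ m - ρ' m)
                (((2 * ((m:ℂ)+1) + 2) / z) * (ρ (m+1) - ρ' (m+1)))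
              linarith
          _ = _ := by rw [norm_mul, hc]
      -- real arithmetic
      have harith : B m + ((2*(m:ℝ)+4)/r) * B (m+1) + ε ≤ B (m+2) := by
        have hNm2 : (((m+2+1)/2 : ℕ) : ℝ) = (((m+1)/2 : ℕ) : ℝ) + 1 := by
          have h : (m+2+1)/2 = (m+1)/2 + 1 := by omega
          rw [h]; push_cast; ring
        have hNmono : (((m+1+1)/2 : ℕ) : ℝ) ≤ (((m+2+1)/2 : ℕ) : ℝ) := by
          exact_mod_cast (by omega : (m+1+1)/2 ≤ (m+2+1)/2)
        set N0 : ℝ := (((m+1)/2 : ℕ) : ℝ) with hN0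
        set N1 : ℝ := (((m+1+1)/2 : ℕ) : ℝ) with hN1d
        set N2 : ℝ := (((m+2+1)/2 : ℕ) : ℝ) with hN2d
        set Em : ℝ := Real.exp (((m:ℝ)^2 + (m:ℝ))/r) with hEm
        set a : ℝ := Real.exp (((((m+1:ℕ)):ℝ)^2 + (((m+1:ℕ)):ℝ))/r) with ha
        set E2 : ℝ := Real.exp (((((m+2:ℕ)):ℝ)^2 + (((m+2:ℕ)):ℝ))/r) with hE2
        set c : ℝ := (2*(m:ℝ)+4)/r with hcdef
        have hc0 : (0:ℝ) ≤ c := by rw [hcdef]; positivity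
        have hN0p : (0:ℝ) ≤ N0 := by rw [hN0]; positivity
        have hN1p : (0:ℝ) ≤ N1 := by rw [hN1d]; positivity
        have hN2p : (0:ℝ) ≤ N2 := by rw [hN2d]; positivity
        have hE1 : (1:ℝ) ≤ a := by
          rw [ha]; apply Real.one_le_exp; positivity
        have hEmono : Em ≤ a := by
          rw [hEm, ha]
          apply Real.exp_le_exp.mpr
          exact (div_le_div_iff_of_pos_right hr0).mpr (by push_cast; nlinarith)
        have hEeq : E2 = a * Real.exp c := by
          rw [hE2, ha, hcdef, ← Real.exp_add]
          congr 1
          push_cast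
          field_simp
          ring
        have hexp : 1 + c ≤ Real.exp c := by
          have := Real.add_one_le_exp c
          linarith
        have hBmv : B m = Em * (N0 + 1) * ε := by simp only [hB, hEm, hN0]
        have hBm1v : B (m+1) = a * (N1 + 1) * ε := by simp only [hB, ha, hN1d]
        have hBm2v : B (m+2) = E2 * (N2 + 1) * ε := by simp only [hB, hE2, hN2d]
        rw [hBmv, hBm1v, hBm2v, hEeq]
        have t1 : Em * (N0 + 1) * ε ≤ a * (N0 + 1) * ε := by
          have h01 : (0:ℝ) ≤ N0 + 1 := by linarith
          have := mul_le_mul_of_nonneg_right hEmono h01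
          exact mul_le_mul_of_nonneg_right this hε.le
        have t2 : c * (a * (N1 + 1) * ε) ≤ c * (a * (N2 + 1) * ε) := by
          apply mul_le_mul_of_nonneg_left ?_ hc0
          have h12 : N1 + 1 ≤ N2 + 1 := by linarith
          have ha0 : (0:ℝ) ≤ a := by linarith
          have := mul_le_mul_of_nonneg_left h12 ha0
          exact mul_le_mul_of_nonneg_right this hε.le
        have t3 : ε ≤ a * ε := by nlinarith
        have t4 : (1 + c) * (a * (N2 + 1) * ε) ≤ Real.exp c * (a * (N2 + 1) * ε) := by
          apply mul_le_mul_of_nonneg_right hexp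
          have ha0 : (0:ℝ) ≤ a := by linarith
          positivity
        have t5 : a * (N0 + 1) * ε + c * (a * (N2 + 1) * ε) + a * ε
            = (1 + c) * (a * (N2 + 1) * ε) := by
          rw [hNm2]; ring
        calc Em * (N0 + 1) * ε + c * (a * (N1 + 1) * ε) + ε
            ≤ a * (N0 + 1) * ε + c * (a * (N2 + 1) * ε) + a * ε := by linarith
          _ = (1 + c) * (a * (N2 + 1) * ε) := t5
          _ ≤ Real.exp c * (a * (N2 + 1) * ε) := t4
          _ = a * Real.exp c * (N2 + 1) * ε := by ring
      have hBm2 : B (m+1+1) = B (m+2) := by norm_num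
      rw [hBm2]
      calc ‖ρ (m+1+1) - ρ' (m+1+1)‖
          ≤ ‖ρ m - ρ' m‖ + ((2*(m:ℝ)+4)/r) * ‖ρ (m+1) - ρ' (m+1)‖
            + ‖e (m+2)‖ := htri
        _ ≤ B m + ((2*(m:ℝ)+4)/r) * B (m+1) + ε := by
            have hc0 : (0:ℝ) ≤ (2*(m:ℝ)+4)/r := by positivity
            have := he (m+2)
            have := mul_le_mul_of_nonneg_left ih2 hc0
            linarith
        _ ≤ B (m+2) := harith
  intro n hn
  have hkey := (key n).1
  refine lt_of_le_of_lt hkey ?_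
  have harg : ((n:ℝ)^2 + n)/r < 4 * ((n:ℝ) + 1) ^ 2 / r := by
    exact (div_lt_div_iff_of_pos_right hr0).mpr (by nlinarith [sq_nonneg ((n:ℝ))])
  have hNpos : (0:ℝ) < (((n+1)/2 : ℕ) : ℝ) + 1 := by positivity
  have : B n = Real.exp (((n:ℝ)^2+n)/r) * ((((n+1)/2:ℕ):ℝ)+1) * ε := rfl
  rw [this]
  push_cast
  exact mul_lt_mul_of_pos_right
    (mul_lt_mul_of_pos_right (Real.exp_lt_exp.mpr harg) hNpos) hε
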